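/- Let R be a Dedekind domain in which every ideal class contains a nonzero prime ideal. Then the class group of R has at most 2 elements if and only if for all irreducibles x, y of R, the set of lengths L(xy) equals {2}. -/

import Mathlib

open UniqueFactorizationMonoid

/-- The set of lengths of factorizations of `z` into irreducibles. -/
def lengthSet {R : Type*} [CommMonoidWithZero R] (z : R) : Set ℕ :=
  {k : ℕ | ∃ α : Fin k → R, (∀ i, Irreducible (α i)) ∧ z = ∏ i, α i}

section Aux
variable {R : Type*} [CommRing R] [IsDomain R] [IsDedekindDomain R]

/-- The class of a nonzero ideal. -/
noncomputable def icls (I : Ideal R) (hI : I ≠ 0) : ClassGroup R :=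
  ClassGroup.mk0 ⟨I, mem_nonZeroDivisors_of_ne_zero hI⟩

lemma icls_mul (I J : Ideal R) (hI : I ≠ 0) (hJ : J ≠ 0) :
    icls (I * J) (mul_ne_zero hI hJ) = icls I hI * icls J hJ := by
  have := MonoidHom.map_mul (ClassGroup.mk0 (R := R))
    ⟨I, mem_nonZeroDivisors_of_ne_zero hI⟩ ⟨J, mem_nonZeroDivisors_of_ne_zero hJ⟩
  rw [icls, icls, icls, ← this]
  rfl

lemma icls_eq_one_iff {I : Ideal R} (hI : I ≠ 0) : icls I hI = 1 ↔ I.IsPrincipal :=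
  ClassGroup.mk0_eq_one_iff _

lemma irreducible_of_span_eq_prod {S : Multiset (Ideal R)} (hp : ∀ p ∈ S, Prime p)
    (hnp : ∀ p ∈ S, ¬ p.IsPrincipal) (hS : S ≠ 0) (hcard : Multiset.card S ≤ 3)
    {x : R} (hx : Ideal.span {x} = S.prod) : Irreducible x := by
  have hprod0 : S.prod ≠ 0 := Multiset.prod_ne_zero_of_prime S hp
  have hx0 : x ≠ 0 := by
    intro h
    exact hprod0 (by rw [← hx, h, Ideal.span_singleton_eq_bot.mpr rfl]; rfl)
  obtain ⟨p, hpS⟩ := Multiset.exists_mem_of_ne_zero hS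
  have hptop : S.prod ≠ ⊤ := by
    intro htop
    have hle : S.prod ≤ p := Ideal.le_of_dvd (Multiset.dvd_prod hpS)
    rw [htop, top_le_iff] at hle
    exact (hp p hpS).not_unit (Ideal.isUnit_iff.mpr hle)
  constructor
  · intro hu
    exact hptop (hx ▸ Ideal.span_singleton_eq_top.mpr hu)
  · intro a b hab
    have ha0 : a ≠ 0 := fun h => hx0 (by rw [hab, h, zero_mul])
    have hb0 : b ≠ 0 := fun h => hx0 (by rw [hab, h, mul_zero])
    have hA0 : Ideal.span {a} ≠ (0 : Ideal R) := by
      rw [Ne, Ideal.zero_eq_bot, Ideal.span_singleton_eq_bot]; exact ha0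
    have hB0 : Ideal.span {b} ≠ (0 : Ideal R) := by
      rw [Ne, Ideal.zero_eq_bot, Ideal.span_singleton_eq_bot]; exact hb0
    have hTU : normalizedFactors (Ideal.span {a}) + normalizedFactors (Ideal.span {b}) = S := by
      rw [← normalizedFactors_mul hA0 hB0, Ideal.span_singleton_mul_span_singleton, ← hab, hx,
        normalizedFactors_prod_of_prime hp]
    have hTa : (normalizedFactors (Ideal.span {a})).prod = Ideal.span {a} :=
      associated_iff_eq.mp (prod_normalizedFactors hA0)
    have hUb : (normalizedFactors (Ideal.span {b})).prod = Ideal.span {b} :=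
      associated_iff_eq.mp (prod_normalizedFactors hB0)
    by_cases hT : normalizedFactors (Ideal.span {a}) = 0
    · left
      rw [hT, Multiset.prod_zero] at hTa
      rw [← Ideal.span_singleton_eq_top, ← Ideal.one_eq_top, hTa]
    by_cases hU : normalizedFactors (Ideal.span {b}) = 0
    · right
      rw [hU, Multiset.prod_zero] at hUb
      rw [← Ideal.span_singleton_eq_top, ← Ideal.one_eq_top, hUb]
    · exfalso
      have hcards : Multiset.card (normalizedFactors (Ideal.span {a})) +
          Multiset.card (normalizedFactors (Ideal.span {b})) = Multiset.card S := by
        rw [← hTU, Multiset.card_add]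
      have hT1 : 0 < Multiset.card (normalizedFactors (Ideal.span {a})) :=
        Multiset.card_pos.mpr hT
      have hU1 : 0 < Multiset.card (normalizedFactors (Ideal.span {b})) :=
        Multiset.card_pos.mpr hU
      have : Multiset.card (normalizedFactors (Ideal.span {a})) = 1 ∨
          Multiset.card (normalizedFactors (Ideal.span {b})) = 1 := by omega
      rcases this with h1 | h1
      · obtain ⟨q, hq⟩ := Multiset.card_eq_one.mp h1
        have hqS : q ∈ S := by
          rw [← hTU]
          exact Multiset.mem_add.mpr (Or.inl (hq ▸ Multiset.mem_singleton_self q))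
        rw [hq, Multiset.prod_singleton] at hTa
        exact hnp q hqS ⟨⟨a, hTa⟩⟩
      · obtain ⟨q, hq⟩ := Multiset.card_eq_one.mp h1
        have hqS : q ∈ S := by
          rw [← hTU]
          exact Multiset.mem_add.mpr (Or.inr (hq ▸ Multiset.mem_singleton_self q))
        rw [hq, Multiset.prod_singleton] at hUb
        exact hnp q hqS ⟨⟨b, hUb⟩⟩

open Classical in
/-- Weight of a prime ideal: 2 if principal, 1 otherwise. -/
noncomputable def iwt (I : Ideal R) : ℕ := if I.IsPrincipal then 2 else 1

/-- Total weight of the prime factorization of an ideal. -/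
noncomputable def iW (I : Ideal R) : ℕ := ((normalizedFactors I).map iwt).sum

lemma iW_mul {I J : Ideal R} (hI : I ≠ 0) (hJ : J ≠ 0) : iW (I * J) = iW I + iW J := by
  rw [iW, iW, iW, normalizedFactors_mul hI hJ, Multiset.map_add, Multiset.sum_add]

lemma cover_mul_eq_one {G : Type*} [Group G] {a b : G} (hcov : ∀ g : G, g = a ∨ g = b)
    {c d : G} (hc : c ≠ 1) (hd : d ≠ 1) : c * d = 1 := by
  have key : ∀ e : G, e = 1 ∨ e = c := by
    intro e
    rcases hcov 1 with h1 | h1 <;> rcases hcov c with h2 | h2 <;> rcases hcov e with h3 | h3 <;>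
      simp_all
  have hc2 : c * c = 1 := by
    rcases key (c * c) with h | h
    · exact h
    · exact absurd (mul_right_cancel (h.trans (one_mul c).symm)) hc
  rcases key d with h | h
  · exact absurd h hd
  · rw [h]; exact hc2

lemma iW_span_irreducible {a b : ClassGroup R} (hcov : ∀ g : ClassGroup R, g = a ∨ g = b)
    {π : R} (hπ : Irreducible π) : iW (Ideal.span {π}) = 2 := by
  classical
  have hπ0 : π ≠ 0 := hπ.ne_zero
  have h0 : Ideal.span ({π} : Set R) ≠ 0 := by
    rw [Ne, Ideal.zero_eq_bot, Ideal.span_singleton_eq_bot]; exact hπ0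
  have hm : (normalizedFactors (Ideal.span ({π} : Set R))).prod = Ideal.span {π} :=
    associated_iff_eq.mp (prod_normalizedFactors h0)
  set m := normalizedFactors (Ideal.span ({π} : Set R)) with hm_def
  have hprime : ∀ p ∈ m, Prime p := fun p hp => prime_of_normalized_factor p hp
  by_cases hex : ∃ p ∈ m, p.IsPrincipal
  · -- a principal prime factor forces the ideal to be that prime
    obtain ⟨𝔭, h𝔭m, ⟨p, hp₀⟩⟩ := hex
    have hp : 𝔭 = Ideal.span ({p} : Set R) := hp₀
    have h𝔭prime : Prime 𝔭 := hprime 𝔭 h𝔭m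
    have h𝔭0 : 𝔭 ≠ 0 := h𝔭prime.ne_zero
    have hp0 : p ≠ 0 := by
      intro h
      rw [h] at hp
      exact h𝔭0 (by rw [hp, Ideal.zero_eq_bot, Ideal.span_singleton_eq_bot])
    have hpp : Prime p := by
      rw [← Ideal.span_singleton_prime hp0, ← hp]
      exact ((Ideal.prime_iff_isPrime (by rwa [← Ideal.zero_eq_bot])).mp h𝔭prime)
    have hdvd : p ∣ π := by
      have h1 : 𝔭 ∣ m.prod := Multiset.dvd_prod h𝔭m
      rw [hm, hp] at h1
      have h1le := Ideal.le_of_dvd h1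
      exact Ideal.mem_span_singleton.mp (h1le (Ideal.mem_span_singleton_self π))
    obtain ⟨e, he⟩ := hdvd
    rcases hπ.isUnit_or_isUnit he with hu | hu
    · exact absurd hu hpp.not_unit
    · have hassoc : Associated π p := by
        refine Associated.symm ⟨hu.unit, ?_⟩
        rw [IsUnit.unit_spec, ← he]
      have hspan : Ideal.span ({π} : Set R) = 𝔭 := by
        rw [hp]
        exact Ideal.span_singleton_eq_span_singleton.mpr hassoc
      have hmirr : Irreducible (Ideal.span ({π} : Set R)) := by
        rw [hspan]; exact h𝔭prime.irreducible
      have : m = {Ideal.span ({π} : Set R)} := by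
        rw [hm_def, normalizedFactors_irreducible hmirr, normalize_eq]
      rw [iW, ← hm_def, this, Multiset.map_singleton, Multiset.sum_singleton, iwt,
        if_pos ⟨⟨π, rfl⟩⟩]
  · push_neg at hex
    have hwt : ∀ p ∈ m, iwt p = 1 := fun p hp => if_neg (hex p hp)
    have hiW : iW (Ideal.span ({π} : Set R)) = Multiset.card m := by
      rw [iW, ← hm_def, Multiset.map_congr rfl hwt, Multiset.map_const',
        Multiset.sum_replicate, smul_eq_mul, mul_one]
    have hm0 : m ≠ 0 := by
      intro h
      rw [h, Multiset.prod_zero, Ideal.one_eq_top] at hm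
      exact hπ.not_isUnit (Ideal.span_singleton_eq_top.mp hm.symm)
    have hc1 : Multiset.card m ≠ 1 := by
      intro h
      obtain ⟨𝔭, h𝔭⟩ := Multiset.card_eq_one.mp h
      rw [h𝔭, Multiset.prod_singleton] at hm
      exact hex 𝔭 (h𝔭 ▸ Multiset.mem_singleton_self 𝔭) ⟨⟨π, hm⟩⟩
    have hc2 : Multiset.card m ≤ 2 := by
      by_contra hgt
      push_neg at hgt
      obtain ⟨𝔭, h𝔭m⟩ := Multiset.exists_mem_of_ne_zero hm0
      obtain ⟨t₁, ht₁⟩ := Multiset.exists_cons_of_mem h𝔭m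
      have ht₁0 : t₁ ≠ 0 := by
        intro h
        rw [ht₁, h] at hgt
        simp at hgt
      obtain ⟨𝔮, h𝔮t⟩ := Multiset.exists_mem_of_ne_zero ht₁0
      obtain ⟨t, ht⟩ := Multiset.exists_cons_of_mem h𝔮t
      have h𝔮m : 𝔮 ∈ m := by rw [ht₁]; exact Multiset.mem_cons_of_mem h𝔮t
      have h𝔭0 : 𝔭 ≠ (0 : Ideal R) := (hprime 𝔭 h𝔭m).ne_zero
      have h𝔮0 : 𝔮 ≠ (0 : Ideal R) := (hprime 𝔮 h𝔮m).ne_zero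
      have hcp : icls 𝔭 h𝔭0 ≠ 1 := fun h => hex 𝔭 h𝔭m ((icls_eq_one_iff h𝔭0).mp h)
      have hcq : icls 𝔮 h𝔮0 ≠ 1 := fun h => hex 𝔮 h𝔮m ((icls_eq_one_iff h𝔮0).mp h)
      have hpq1 : icls (𝔭 * 𝔮) (mul_ne_zero h𝔭0 h𝔮0) = 1 := by
        rw [icls_mul _ _ h𝔭0 h𝔮0]
        exact cover_mul_eq_one hcov hcp hcq
      obtain ⟨d, hd₀⟩ := (icls_eq_one_iff _).mp hpq1
      have hd : 𝔭 * 𝔮 = Ideal.span ({d} : Set R) := hd₀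
      have hddvd : d ∣ π := by
        have h1 : 𝔭 * 𝔮 ∣ m.prod := by
          refine ⟨t.prod, ?_⟩
          rw [ht₁, ht, Multiset.prod_cons, Multiset.prod_cons, mul_assoc]
        rw [hm, hd] at h1
        have h1le := Ideal.le_of_dvd h1
        exact Ideal.mem_span_singleton.mp (h1le (Ideal.mem_span_singleton_self π))
      obtain ⟨e, he⟩ := hddvd
      rcases hπ.isUnit_or_isUnit he with hu | hu
      · have htop : 𝔭 * 𝔮 = ⊤ := by
          rw [hd, Ideal.span_singleton_eq_top.mpr hu]
        have hle : 𝔭 * 𝔮 ≤ 𝔭 := Ideal.mul_le_left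
        rw [htop, top_le_iff] at hle
        exact (hprime 𝔭 h𝔭m).not_unit (Ideal.isUnit_iff.mpr hle)
      · have hassoc : Associated π d := by
          refine Associated.symm ⟨hu.unit, ?_⟩
          rw [IsUnit.unit_spec, ← he]
        have hspan : Ideal.span ({π} : Set R) = 𝔭 * 𝔮 := by
          rw [hd]
          exact Ideal.span_singleton_eq_span_singleton.mpr hassoc
        have hprod2 : 𝔭 * 𝔮 = (𝔭 ::ₘ {𝔮} : Multiset (Ideal R)).prod := by
          rw [Multiset.prod_cons, Multiset.prod_singleton]
        have hm2 : m = (𝔭 ::ₘ {𝔮} : Multiset (Ideal R)) := by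
          rw [hm_def, hspan, hprod2, normalizedFactors_prod_of_prime]
          intro p hp
          rcases Multiset.mem_cons.mp hp with h | h
          · rw [h]; exact hprime 𝔭 h𝔭m
          · rw [Multiset.mem_singleton.mp h]; exact hprime 𝔮 h𝔮m
        rw [hm2] at hgt
        simp at hgt
    have : Multiset.card m = 2 := by
      have := Multiset.card_pos.mpr hm0
      omega
    rw [hiW, this]

lemma iW_span_prod_irreducibles {a b : ClassGroup R} (hcov : ∀ g : ClassGroup R, g = a ∨ g = b) :
    ∀ {k : ℕ} (α : Fin k → R), (∀ i, Irreducible (α i)) →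
      iW (Ideal.span {∏ i, α i}) = 2 * k := by
  intro k
  induction k with
  | zero =>
    intro α _
    rw [Fin.prod_univ_zero, iW, Ideal.span_singleton_one, ← Ideal.one_eq_top,
      normalizedFactors_one]
    simp
  | succ n ih =>
    intro α hα
    have hhead : Ideal.span ({α 0} : Set R) ≠ (0 : Ideal R) := by
      rw [Ne, Ideal.zero_eq_bot, Ideal.span_singleton_eq_bot]; exact (hα 0).ne_zero
    have htail0 : (∏ i : Fin n, α i.succ) ≠ 0 :=
      Finset.prod_ne_zero_iff.mpr fun i _ => (hα i.succ).ne_zero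
    have htail : Ideal.span ({∏ i : Fin n, α i.succ} : Set R) ≠ (0 : Ideal R) := by
      rw [Ne, Ideal.zero_eq_bot, Ideal.span_singleton_eq_bot]; exact htail0
    rw [Fin.prod_univ_succ, ← Ideal.span_singleton_mul_span_singleton, iW_mul hhead htail,
      iW_span_irreducible hcov (hα 0), ih (fun i => α i.succ) (fun i => hα i.succ)]
    ring

end Aux

theorem class_number_le_two_iff_length_of_products_of_two
    {R : Type*} [CommRing R] [IsDomain R] [IsDedekindDomain R]
    (hprimes : ∀ c : ClassGroup R, ∃ (𝔭 : Ideal R) (h𝔭 : 𝔭 ∈ nonZeroDivisors (Ideal R)),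
      𝔭.IsPrime ∧ 𝔭 ≠ ⊥ ∧ ClassGroup.mk0 ⟨𝔭, h𝔭⟩ = c) :
    (∃ a b : ClassGroup R, ∀ g : ClassGroup R, g = a ∨ g = b) ↔
      ∀ x y : R, Irreducible x → Irreducible y → lengthSet (x * y) = {2} := by
  have hP : ∀ c : ClassGroup R, ∃ (𝔭 : Ideal R) (h0 : 𝔭 ≠ 0), Prime 𝔭 ∧ icls 𝔭 h0 = c := by
    intro c
    obtain ⟨𝔭, h𝔭, hPr, hbot, hcls⟩ := hprimes c
    have h0 : 𝔭 ≠ 0 := by rwa [Ideal.zero_eq_bot]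
    refine ⟨𝔭, h0, (Ideal.prime_iff_isPrime hbot).mpr hPr, ?_⟩
    rw [icls]
    convert hcls using 2
  constructor
  · rintro ⟨a, b, hcov⟩ x y hx hy
    ext k
    simp only [lengthSet, Set.mem_setOf_eq, Set.mem_singleton_iff]
    constructor
    · rintro ⟨α, hα, hprod⟩
      have hX : Ideal.span ({x} : Set R) ≠ (0 : Ideal R) := by
        rw [Ne, Ideal.zero_eq_bot, Ideal.span_singleton_eq_bot]; exact hx.ne_zero
      have hY : Ideal.span ({y} : Set R) ≠ (0 : Ideal R) := by
        rw [Ne, Ideal.zero_eq_bot, Ideal.span_singleton_eq_bot]; exact hy.ne_zero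
      have h1 : iW (Ideal.span {x * y}) = 2 * k := by
        rw [hprod]; exact iW_span_prod_irreducibles hcov α hα
      have h2 : iW (Ideal.span {x * y}) = 4 := by
        rw [← Ideal.span_singleton_mul_span_singleton, iW_mul hX hY,
          iW_span_irreducible hcov hx, iW_span_irreducible hcov hy]
      omega
    · rintro rfl
      refine ⟨![x, y], fun i => ?_, ?_⟩
      · fin_cases i <;> simpa
      · simp [Fin.prod_univ_two]
  · intro hL
    by_contra hcov
    push_neg at hcov
    obtain ⟨g₀, hg₀, -⟩ := hcov 1 1
    obtain ⟨g, h, hg, hh, hgh⟩ : ∃ g h : ClassGroup R, g ≠ 1 ∧ h ≠ 1 ∧ g * h ≠ 1 := by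
      by_cases hg2 : g₀ * g₀ = 1
      · obtain ⟨h, hh1, hhg⟩ := hcov 1 g₀
        refine ⟨g₀, h, hg₀, hh1, fun hgh => hhg ?_⟩
        calc h = (g₀ * g₀) * h := by rw [hg2, one_mul]
          _ = g₀ * (g₀ * h) := mul_assoc _ _ _
          _ = g₀ := by rw [hgh, mul_one]
      · exact ⟨g₀, g₀, hg₀, hg₀, hg2⟩
    obtain ⟨P₁, hP₁0, hP₁p, hP₁c⟩ := hP g
    obtain ⟨P₂, hP₂0, hP₂p, hP₂c⟩ := hP g⁻¹
    obtain ⟨Q₁, hQ₁0, hQ₁p, hQ₁c⟩ := hP h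
    obtain ⟨Q₂, hQ₂0, hQ₂p, hQ₂c⟩ := hP h⁻¹
    obtain ⟨T₁, hT₁0, hT₁p, hT₁c⟩ := hP (g * h)⁻¹
    obtain ⟨T₂, hT₂0, hT₂p, hT₂c⟩ := hP (g * h)
    -- nonprincipality
    have hnpP₁ : ¬ P₁.IsPrincipal := fun hpr => hg (hP₁c ▸ (icls_eq_one_iff hP₁0).mpr hpr)
    have hnpP₂ : ¬ P₂.IsPrincipal := fun hpr => hg (inv_eq_one.mp
      (hP₂c ▸ (icls_eq_one_iff hP₂0).mpr hpr))
    have hnpQ₁ : ¬ Q₁.IsPrincipal := fun hpr => hh (hQ₁c ▸ (icls_eq_one_iff hQ₁0).mpr hpr)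
    have hnpQ₂ : ¬ Q₂.IsPrincipal := fun hpr => hh (inv_eq_one.mp
      (hQ₂c ▸ (icls_eq_one_iff hQ₂0).mpr hpr))
    have hnpT₁ : ¬ T₁.IsPrincipal := fun hpr => hgh (inv_eq_one.mp
      (hT₁c ▸ (icls_eq_one_iff hT₁0).mpr hpr))
    have hnpT₂ : ¬ T₂.IsPrincipal := fun hpr => hgh (hT₂c ▸ (icls_eq_one_iff hT₂0).mpr hpr)
    -- principal products
    have hx1 : icls (P₁ * Q₁ * T₁) (mul_ne_zero (mul_ne_zero hP₁0 hQ₁0) hT₁0) = 1 := by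
      rw [icls_mul _ _ (mul_ne_zero hP₁0 hQ₁0) hT₁0, icls_mul _ _ hP₁0 hQ₁0,
        hP₁c, hQ₁c, hT₁c, mul_inv_cancel]
    have hy1 : icls (P₂ * Q₂ * T₂) (mul_ne_zero (mul_ne_zero hP₂0 hQ₂0) hT₂0) = 1 := by
      rw [icls_mul _ _ (mul_ne_zero hP₂0 hQ₂0) hT₂0, icls_mul _ _ hP₂0 hQ₂0,
        hP₂c, hQ₂c, hT₂c, ← mul_inv_rev, mul_comm h g, inv_mul_cancel]
    have ha1 : icls (P₁ * P₂) (mul_ne_zero hP₁0 hP₂0) = 1 := by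
      rw [icls_mul _ _ hP₁0 hP₂0, hP₁c, hP₂c, mul_inv_cancel]
    have hb1 : icls (Q₁ * Q₂) (mul_ne_zero hQ₁0 hQ₂0) = 1 := by
      rw [icls_mul _ _ hQ₁0 hQ₂0, hQ₁c, hQ₂c, mul_inv_cancel]
    have hc1 : icls (T₁ * T₂) (mul_ne_zero hT₁0 hT₂0) = 1 := by
      rw [icls_mul _ _ hT₁0 hT₂0, hT₁c, hT₂c, inv_mul_cancel]
    obtain ⟨x, hxs₀⟩ := (icls_eq_one_iff _).mp hx1
    obtain ⟨y, hys₀⟩ := (icls_eq_one_iff _).mp hy1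
    obtain ⟨a, has₀⟩ := (icls_eq_one_iff _).mp ha1
    obtain ⟨b, hbs₀⟩ := (icls_eq_one_iff _).mp hb1
    obtain ⟨c, hcs₀⟩ := (icls_eq_one_iff _).mp hc1
    have hxs : P₁ * Q₁ * T₁ = Ideal.span ({x} : Set R) := hxs₀
    have hys : P₂ * Q₂ * T₂ = Ideal.span ({y} : Set R) := hys₀
    have has : P₁ * P₂ = Ideal.span ({a} : Set R) := has₀
    have hbs : Q₁ * Q₂ = Ideal.span ({b} : Set R) := hbs₀
    have hcs : T₁ * T₂ = Ideal.span ({c} : Set R) := hcs₀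
    -- irreducibility
    have hxirr : Irreducible x := by
      refine irreducible_of_span_eq_prod (S := {P₁, Q₁, T₁}) ?_ ?_ (by simp) (by simp) ?_
      · intro p hp
        fin_cases hp <;> assumption
      · intro p hp
        fin_cases hp <;> assumption
      · rw [← hxs]
        simp [Multiset.prod_cons, mul_assoc]
    have hyirr : Irreducible y := by
      refine irreducible_of_span_eq_prod (S := {P₂, Q₂, T₂}) ?_ ?_ (by simp) (by simp) ?_
      · intro p hp
        fin_cases hp <;> assumption
      · intro p hp
        fin_cases hp <;> assumption
      · rw [← hys]
        simp [Multiset.prod_cons, mul_assoc]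
    have hairr : Irreducible a := by
      refine irreducible_of_span_eq_prod (S := {P₁, P₂}) ?_ ?_ (by simp) (by simp) ?_
      · intro p hp
        fin_cases hp <;> assumption
      · intro p hp
        fin_cases hp <;> assumption
      · rw [← has]
        simp [Multiset.prod_cons]
    have hbirr : Irreducible b := by
      refine irreducible_of_span_eq_prod (S := {Q₁, Q₂}) ?_ ?_ (by simp) (by simp) ?_
      · intro p hp
        fin_cases hp <;> assumption
      · intro p hp
        fin_cases hp <;> assumption
      · rw [← hbs]
        simp [Multiset.prod_cons]
    have hcirr : Irreducible c := by
      refine irreducible_of_span_eq_prod (S := {T₁, T₂}) ?_ ?_ (by simp) (by simp) ?_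
      · intro p hp
        fin_cases hp <;> assumption
      · intro p hp
        fin_cases hp <;> assumption
      · rw [← hcs]
        simp [Multiset.prod_cons]
    -- the two factorizations generate the same ideal
    have hspan : Ideal.span ({x * y} : Set R) = Ideal.span ({a * (b * c)} : Set R) := by
      rw [← Ideal.span_singleton_mul_span_singleton, ← hxs, ← hys,
        ← Ideal.span_singleton_mul_span_singleton, ← Ideal.span_singleton_mul_span_singleton,
        ← has, ← hbs, ← hcs]
      ring
    obtain ⟨u, hu⟩ := Ideal.span_singleton_eq_span_singleton.mp hspan
    have hxyu : x * y = a * ↑u⁻¹ * (b * c) := by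
      have : x * y * ↑u * ↑u⁻¹ = a * (b * c) * ↑u⁻¹ := by rw [hu]
      rw [mul_assoc (x * y), Units.mul_inv, mul_one] at this
      rw [this]; ring
    have h3 : (3 : ℕ) ∈ lengthSet (x * y) := by
      refine ⟨![a * ↑u⁻¹, b, c], fun i => ?_, ?_⟩
      · fin_cases i
        · simpa using (irreducible_mul_isUnit (Units.isUnit u⁻¹)).mpr hairr
        · simpa using hbirr
        · simpa using hcirr
      · rw [Fin.prod_univ_three]
        simpa [mul_assoc] using hxyu
    rw [hL x y hxirr hyirr] at h3
    simp at h3
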